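/- Let κ > 0, μ ∈ ℝ, ν ∈ (0, 1), and let h₂(θ) = e^{κ cos(θ − μ)} (1 + ν cos θ) / (2π (I₀(κ) + ν cos μ · I₁(κ))). Then for every integer p, the p-th trigonometric moment satisfies ∫₀^{2π} e^{i p θ} h₂(θ) dθ = ( ν I_{p−1}(κ) e^{i(p−1)μ} + 2 I_p(κ) e^{i p μ} + ν I_{p+1}(κ) e^{i(p+1)μ} ) / ( 2 ( I₀(κ) + ν cos μ · I₁(κ) ) ). -/

import Mathlib

open Real

/-- The modified Bessel function of the first kind of integer order `p`,
defined by `I_p(κ) = (1/(2π)) ∫₀^{2π} e^{κ cos θ} cos(pθ) dθ`. -/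
noncomputable def besselI (p : ℤ) (κ : ℝ) : ℝ :=
  (1 / (2 * π)) * ∫ θ in (0:ℝ)..(2 * π), Real.exp (κ * Real.cos θ) * Real.cos (p * θ)

/-- The marginal density of the vertical angle of the von Mises distribution
on the curved torus with radius ratio `ν`. -/
noncomputable def h₂ (κ μ ν : ℝ) (θ : ℝ) : ℝ :=
  Real.exp (κ * Real.cos (θ - μ)) * (1 + ν * Real.cos θ)
    / (2 * π * (besselI 0 κ + ν * Real.cos μ * besselI 1 κ))

lemma sin_int_zero (p : ℤ) (κ : ℝ) :
    ∫ θ in (0:ℝ)..(2 * π), Real.exp (κ * Real.cos θ) * Real.sin (p * θ) = 0 := by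
  have h := intervalIntegral.integral_comp_sub_left (a := (0:ℝ)) (b := 2*π)
    (fun θ => Real.exp (κ * Real.cos θ) * Real.sin (p * θ)) (2*π)
  simp only [sub_self, sub_zero] at h
  have heq : ∀ x : ℝ, Real.exp (κ * Real.cos (2*π - x)) * Real.sin (p * (2*π - x))
      = -(Real.exp (κ * Real.cos x) * Real.sin (p * x)) := by
    intro x
    have hc : Real.cos (2*π - x) = Real.cos x := by
      rw [Real.cos_sub]; simp [Real.cos_two_pi, Real.sin_two_pi]
    have hs : Real.sin (p * (2*π - x)) = -Real.sin (p * x) := by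
      have : (p:ℝ) * (2*π - x) = (2*p) * π - p * x := by push_cast; ring
      rw [this, Real.sin_sub]
      have h1 : Real.sin ((2*p:ℤ) * π) = 0 := Real.sin_int_mul_pi (2*p)
      have h2 : Real.cos ((2*p:ℤ) * π) = 1 := by
        rw [show ((2*p:ℤ):ℝ) * π = (p:ℝ) * (2*π) by push_cast; ring]
        exact Real.cos_int_mul_two_pi p
      push_cast at h1 h2
      rw [h1, h2]; ring
    rw [hc, hs]; ring
  simp only [heq] at h
  rw [intervalIntegral.integral_neg] at h
  linarith [h]

lemma bessel_complex (p : ℤ) (κ : ℝ) :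
    ∫ θ in (0:ℝ)..(2 * π), Complex.exp (Complex.I * p * θ) * (Real.exp (κ * Real.cos θ) : ℂ)
      = 2 * π * besselI p κ := by
  have heq : ∀ θ : ℝ, Complex.exp (Complex.I * p * θ) * (Real.exp (κ * Real.cos θ) : ℂ)
      = ((Real.exp (κ * Real.cos θ) * Real.cos (p * θ) : ℝ) : ℂ)
        + Complex.I * ((Real.exp (κ * Real.cos θ) * Real.sin (p * θ) : ℝ) : ℂ) := by
    intro θ
    rw [show Complex.I * p * θ = ((p * θ : ℝ):ℂ) * Complex.I by push_cast; ring,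
      Complex.exp_mul_I]
    push_cast
    ring
  rw [intervalIntegral.integral_congr (g := fun θ => ((Real.exp (κ * Real.cos θ) * Real.cos (p * θ) : ℝ) : ℂ)
        + Complex.I * ((Real.exp (κ * Real.cos θ) * Real.sin (p * θ) : ℝ) : ℂ)) (fun θ _ => heq θ)]
  rw [intervalIntegral.integral_add, intervalIntegral.integral_const_mul,
    intervalIntegral.integral_ofReal, intervalIntegral.integral_ofReal, sin_int_zero]
  · simp only [besselI]
    push_cast
    have hπ : (π:ℂ) ≠ 0 := by exact_mod_cast Real.pi_ne_zero
    field_simp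
    simp
  · apply Continuous.intervalIntegrable; fun_prop
  · apply Continuous.intervalIntegrable; fun_prop

lemma shift_int (p : ℤ) (κ μ : ℝ) :
    ∫ θ in (0:ℝ)..(2 * π), Complex.exp (Complex.I * p * θ) * (Real.exp (κ * Real.cos (θ - μ)) : ℂ)
      = Complex.exp (Complex.I * p * μ) * (2 * π * besselI p κ) := by
  set F : ℝ → ℂ := fun u => Complex.exp (Complex.I * p * u) * (Real.exp (κ * Real.cos u) : ℂ) with hF
  have hper : Function.Periodic F (2 * π) := by
    intro u
    simp only [hF]
    have h1 : Complex.exp (Complex.I * p * (↑(u + 2*π)))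
        = Complex.exp (Complex.I * p * u) * Complex.exp ((p:ℂ) * (2*π*Complex.I)) := by
      rw [← Complex.exp_add]; push_cast; ring_nf
    rw [h1, Complex.exp_int_mul_two_pi_mul_I]
    simp [Real.cos_add, Real.cos_two_pi, Real.sin_two_pi]
  have heq : ∀ θ : ℝ, Complex.exp (Complex.I * p * θ) * (Real.exp (κ * Real.cos (θ - μ)) : ℂ)
      = Complex.exp (Complex.I * p * μ) * F (θ - μ) := by
    intro θ
    simp only [hF]
    rw [← mul_assoc, ← Complex.exp_add]
    push_cast
    ring_nf
  rw [intervalIntegral.integral_congr (g := fun θ => Complex.exp (Complex.I * p * μ) * F (θ - μ))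
      (fun θ _ => heq θ)]
  rw [intervalIntegral.integral_const_mul]
  have hsub : (∫ θ in (0:ℝ)..(2*π), F (θ - μ)) = ∫ u in (0-μ)..(2*π - μ), F u :=
    intervalIntegral.integral_comp_sub_right F μ
  have hper2 : (∫ u in (0-μ)..(2*π - μ), F u) = ∫ u in (0:ℝ)..(2*π), F u := by
    have := hper.intervalIntegral_add_eq (-μ) 0
    rw [show 2*π - μ = -μ + 2*π by ring, show (0:ℝ) - μ = -μ by ring]
    simpa using this
  rw [hsub, hper2, bessel_complex]

theorem stmt6 (κ μ ν : ℝ) (hκ : 0 < κ) (hν : ν ∈ Set.Ioo (0:ℝ) 1) (p : ℤ) :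
    (∫ θ in (0:ℝ)..(2 * π), Complex.exp (Complex.I * p * θ) * (h₂ κ μ ν θ : ℂ))
      = ((ν : ℂ) * (besselI (p - 1) κ : ℂ) * Complex.exp (Complex.I * (p - 1) * μ)
          + 2 * (besselI p κ : ℂ) * Complex.exp (Complex.I * p * μ)
          + (ν : ℂ) * (besselI (p + 1) κ : ℂ) * Complex.exp (Complex.I * (p + 1) * μ))
        / (2 * ((besselI 0 κ : ℂ) + (ν : ℂ) * Real.cos μ * (besselI 1 κ : ℂ))) := by
  set c : ℝ := besselI 0 κ + ν * Real.cos μ * besselI 1 κ with hc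
  have heq : ∀ θ : ℝ, Complex.exp (Complex.I * p * θ) * (h₂ κ μ ν θ : ℂ)
      = ((2 * π * c : ℝ) : ℂ)⁻¹ *
        ((ν/2 : ℂ) * (Complex.exp (Complex.I * (p-1 : ℤ) * θ) * (Real.exp (κ * Real.cos (θ - μ)) : ℂ))
          + Complex.exp (Complex.I * p * θ) * (Real.exp (κ * Real.cos (θ - μ)) : ℂ)
          + (ν/2 : ℂ) * (Complex.exp (Complex.I * (p+1 : ℤ) * θ) * (Real.exp (κ * Real.cos (θ - μ)) : ℂ))) := by
    intro θ
    have e1 : Complex.exp (Complex.I * (p-1 : ℤ) * θ)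
        = Complex.exp (Complex.I * p * θ) * Complex.exp (-(θ:ℂ) * Complex.I) := by
      rw [← Complex.exp_add]; push_cast; ring_nf
    have e2 : Complex.exp (Complex.I * (p+1 : ℤ) * θ)
        = Complex.exp (Complex.I * p * θ) * Complex.exp ((θ:ℂ) * Complex.I) := by
      rw [← Complex.exp_add]; push_cast; ring_nf
    have e3 : Complex.exp ((θ:ℂ) * Complex.I) + Complex.exp (-(θ:ℂ) * Complex.I)
        = 2 * (Real.cos θ : ℂ) := by
      rw [Complex.exp_mul_I, show -(θ:ℂ) * Complex.I = (-θ:ℝ) * Complex.I by push_cast; ring,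
        Complex.exp_mul_I]
      push_cast
      simp [Complex.cos_neg, Complex.sin_neg]
      ring
    rw [e1, e2]
    simp only [h₂, ← hc]
    push_cast
    rw [div_eq_inv_mul]
    have : Complex.exp (Complex.I * ↑p * ↑θ) * Complex.exp (↑θ * Complex.I)
        + Complex.exp (Complex.I * ↑p * ↑θ) * Complex.exp (-↑θ * Complex.I)
        = Complex.exp (Complex.I * ↑p * ↑θ) * (2 * Complex.cos ↑θ) := by
      rw [← mul_add]
      congr 1
      exact_mod_cast e3
    linear_combination (-((((π:ℂ)*(c:ℂ))⁻¹) * ((ν:ℂ)/4) * Complex.exp ((κ:ℂ) * Complex.cos ((θ:ℂ) - (μ:ℂ))))) * this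
  rw [intervalIntegral.integral_congr (g := fun θ => ((2 * π * c : ℝ) : ℂ)⁻¹ *
        ((ν/2 : ℂ) * (Complex.exp (Complex.I * (p-1 : ℤ) * θ) * (Real.exp (κ * Real.cos (θ - μ)) : ℂ))
          + Complex.exp (Complex.I * p * θ) * (Real.exp (κ * Real.cos (θ - μ)) : ℂ)
          + (ν/2 : ℂ) * (Complex.exp (Complex.I * (p+1 : ℤ) * θ) * (Real.exp (κ * Real.cos (θ - μ)) : ℂ))))
      (fun θ _ => heq θ)]
  rw [intervalIntegral.integral_const_mul, intervalIntegral.integral_add, intervalIntegral.integral_add,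
      intervalIntegral.integral_const_mul, intervalIntegral.integral_const_mul,
      shift_int, shift_int, shift_int]
  · have hcC : ((besselI 0 κ : ℂ) + (ν : ℂ) * Real.cos μ * (besselI 1 κ : ℂ)) = (c : ℂ) := by
      rw [hc]; push_cast; ring
    rw [hcC]
    by_cases hcz : c = 0
    · simp [hcz]
    · have hπ : (π:ℂ) ≠ 0 := by exact_mod_cast Real.pi_ne_zero
      have hcC0 : (c:ℂ) ≠ 0 := by exact_mod_cast hcz
      push_cast
      field_simp
  · apply Continuous.intervalIntegrable; fun_prop
  · apply Continuous.intervalIntegrable; fun_prop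
  · apply Continuous.intervalIntegrable
    apply Continuous.add
    · fun_prop
    · fun_prop
  · apply Continuous.intervalIntegrable; fun_prop
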